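/- Let f : 2^V → ℝ be a non-negative monotone increasing set function with submodularity ratio γ and generalized curvature α. Then for any A ⊆ B ⊆ V, the restriction f_{A,B} (a non-negative monotone increasing set function on 2^{V∖B}) has submodularity ratio γ_{A,B} ≥ γ and generalized curvature α_{A,B} ≤ α. -/
import Mathlib


/-!
Statement 9: the restriction f_{A,B} of a non-negative monotone increasing
set function f inherits the submodularity ratio and generalized curvature
bounds of f. Since the submodularity ratio is the *largest* γ with the stated
property and the generalized curvature the *smallest* α, the claims
γ_{A,B} ≥ γ and α_{A,B} ≤ α say exactly: every γ valid for f is valid for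
f_{A,B} and every α valid for f is valid for f_{A,B}.
-/

/-- The restriction f_{A,B} of a set function: T ↦ f(A ∪ T). -/
def restrictSF {V : Type*} [DecidableEq V] (f : Finset V → ℝ) (A : Finset V) :
    Finset V → ℝ := fun T => f (A ∪ T)

/-- γ is a valid submodularity-ratio bound for `f` regarded as a set function
on subsets of the complement of `B`:
Σ_{e∈S} Δ(e|T) ≥ γ·Δ(S|T) for all disjoint S, T ⊆ V∖B. -/
def HasSubmodRatioOn {V : Type*} [DecidableEq V] (B : Finset V)
    (f : Finset V → ℝ) (γ : ℝ) : Prop :=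
  ∀ S T : Finset V, Disjoint S T → Disjoint S B → Disjoint T B →
    γ * (f (S ∪ T) - f T) ≤ ∑ e ∈ S, (f (insert e T) - f T)

/-- α is a valid generalized-curvature bound for `f` regarded as a set
function on subsets of the complement of `B`:
Δ(e | (S∖{e}) ∪ T) ≥ (1−α)·Δ(e | S∖{e}) for all S, T ⊆ V∖B and e ∈ S∖T. -/
def HasCurvatureOn {V : Type*} [DecidableEq V] (B : Finset V)
    (f : Finset V → ℝ) (α : ℝ) : Prop :=
  ∀ S T : Finset V, Disjoint S B → Disjoint T B → ∀ e ∈ S, e ∉ T →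
    (1 - α) * (f (insert e (S.erase e)) - f (S.erase e)) ≤
      f (insert e (S.erase e ∪ T)) - f (S.erase e ∪ T)

theorem statement9 {V : Type*} [Fintype V] [DecidableEq V]
    (f : Finset V → ℝ)
    (hnn : ∀ S : Finset V, 0 ≤ f S)
    (hmono : ∀ S T : Finset V, S ⊆ T → f S ≤ f T)
    (γ α : ℝ) (A B : Finset V) (hAB : A ⊆ B) :
    (HasSubmodRatioOn ∅ f γ → HasSubmodRatioOn B (restrictSF f A) γ) ∧
    (HasCurvatureOn ∅ f α → HasCurvatureOn B (restrictSF f A) α) := by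
  constructor
  · intro h S T hST hSB hTB
    have hSA : Disjoint S A := hSB.mono_right hAB
    have h1 := h S (A ∪ T) (Finset.disjoint_union_right.2 ⟨hSA, hST⟩)
      (Finset.disjoint_empty_right S) (Finset.disjoint_empty_right _)
    have e1 : S ∪ (A ∪ T) = A ∪ (S ∪ T) := Finset.union_left_comm S A T
    have e2 : ∀ e : V, insert e (A ∪ T) = A ∪ insert e T :=
      fun e => (Finset.union_insert _ _ _).symm
    rw [e1] at h1
    simp only [e2] at h1
    simpa [restrictSF] using h1
  · intro h S T hSB hTB e heS heT
    have heA : e ∉ A := fun hx => Finset.disjoint_left.1 hSB heS (hAB hx)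
    have h1 := h (A ∪ S) T (Finset.disjoint_empty_right _)
      (Finset.disjoint_empty_right _) e (Finset.mem_union_right _ heS) heT
    have e0 : (A ∪ S).erase e = A ∪ S.erase e := by
      rw [Finset.erase_union_distrib, Finset.erase_eq_of_notMem heA]
    have e1 : insert e (A ∪ S.erase e) = A ∪ insert e (S.erase e) :=
      (Finset.union_insert _ _ _).symm
    have e2 : A ∪ S.erase e ∪ T = A ∪ (S.erase e ∪ T) := Finset.union_assoc _ _ _
    have e3 : insert e (A ∪ (S.erase e ∪ T)) = A ∪ insert e (S.erase e ∪ T) :=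
      (Finset.union_insert _ _ _).symm
    rw [e0, e1, e2, e3] at h1
    simpa [restrictSF] using h1
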